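/- For every n ∈ ℕ, (Σ_{j=0}^{n} Σ_{k=0}^{2n} ((−2/3)_k / k!) · C(k,j) · C(3n−k, 2n−k) · C(2n−k, n−j)) · ((5/9)_n / n!) = 27^n · (1/9)_n (4/9)_n (5/9)_n (7/9)_n / ((1/3)_n · (n!)³). (This expresses, in coefficient form, that the diagonal of the four-variable algebraic function ((1−x−y)^{2/3}/(1−x−y−z)) · (1−w)^{−5/9} equals ₄F₃([1/9, 4/9, 5/9, 7/9], [1/3, 1, 1], 27x).) -/

import Mathlib

open Finset


lemma pascal_sum (f g : ℕ → ℚ) (m : ℕ) :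
    ∑ k ∈ range (m + 2), ((m + 1).choose k : ℚ) * f k * g (m + 1 - k)
      = ∑ k ∈ range (m + 1), (m.choose k : ℚ) * (f (k + 1) * g (m - k) + f k * g (m + 1 - k)) := by
  have e1 : ∑ k ∈ range (m + 2), ((m + 1).choose k : ℚ) * f k * g (m + 1 - k)
      = ∑ k ∈ range (m + 1), ((m.choose k : ℚ) + (m.choose (k + 1) : ℚ)) * f (k + 1) * g (m - k)
        + f 0 * g (m + 1) := by
    rw [Finset.sum_range_succ' _ (m + 1)]
    simp [Nat.choose_succ_succ, Nat.succ_sub_succ]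
  have e2 : ∑ k ∈ range (m + 1), (m.choose k : ℚ) * f k * g (m + 1 - k)
      = ∑ k ∈ range (m + 1), (m.choose (k + 1) : ℚ) * f (k + 1) * g (m - k)
        + f 0 * g (m + 1) := by
    rw [Finset.sum_range_succ' _ m, Finset.sum_range_succ]
    simp [Nat.succ_sub_succ]
  rw [e1]
  simp only [add_mul, mul_add, Finset.sum_add_distrib, mul_assoc]
  simp only [mul_assoc] at e2
  linarith [e2]

lemma chu (α β : ℚ) (m : ℕ) :
    ∑ k ∈ range (m + 1), (m.choose k : ℚ) * (ascPochhammer ℚ k).eval α *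
      (ascPochhammer ℚ (m - k)).eval β = (ascPochhammer ℚ m).eval (α + β) := by
  induction m with
  | zero => simp
  | succ m ih =>
    rw [show m + 1 + 1 = m + 2 from rfl,
      pascal_sum (fun k => (ascPochhammer ℚ k).eval α) (fun k => (ascPochhammer ℚ k).eval β) m]
    have : ∀ k ∈ range (m + 1),
        (m.choose k : ℚ) * ((ascPochhammer ℚ (k + 1)).eval α * (ascPochhammer ℚ (m - k)).eval β
          + (ascPochhammer ℚ k).eval α * (ascPochhammer ℚ (m + 1 - k)).eval β)
        = ((m.choose k : ℚ) * (ascPochhammer ℚ k).eval α * (ascPochhammer ℚ (m - k)).eval β)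
            * (α + β + m) := by
      intro k hk
      have hk' : k ≤ m := Nat.lt_succ_iff.mp (Finset.mem_range.mp hk)
      have h1 : m + 1 - k = (m - k) + 1 := by omega
      rw [h1, ascPochhammer_succ_eval, ascPochhammer_succ_eval]
      have hc : ((m - k : ℕ) : ℚ) = (m : ℚ) - k := by
        push_cast [Nat.cast_sub hk']; ring
      rw [hc]
      ring
    rw [Finset.sum_congr rfl this, ← Finset.sum_mul, ih, ascPochhammer_succ_eval]

lemma trip (n : ℕ) : (ascPochhammer ℚ (3 * n)).eval (1/3)
    = 27 ^ n * (ascPochhammer ℚ n).eval (1/9) * (ascPochhammer ℚ n).eval (4/9) *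
      (ascPochhammer ℚ n).eval (7/9) := by
  induction n with
  | zero => simp
  | succ n ih =>
    have h3 : 3 * (n + 1) = 3 * n + 1 + 1 + 1 := by ring
    rw [h3, ascPochhammer_succ_eval, ascPochhammer_succ_eval, ascPochhammer_succ_eval, ih,
      ascPochhammer_succ_eval, ascPochhammer_succ_eval, ascPochhammer_succ_eval]
    push_cast
    ring

lemma prodlem (n : ℕ) : (ascPochhammer ℚ n).eval (1/3) *
      (ascPochhammer ℚ (2*n)).eval (1/3 + (n:ℚ))
    = (ascPochhammer ℚ (3*n)).eval (1/3) := by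
  have h := congrArg (Polynomial.eval (1/3 : ℚ)) (ascPochhammer_mul (S := ℚ) n (2*n))
  simpa [Polynomial.eval_comp, show n + 2*n = 3*n by ring] using h

lemma vdm (n k : ℕ) (hk : k ≤ 2 * n) :
    ∑ j ∈ range (n + 1), k.choose j * (2*n - k).choose (n - j) = (2*n).choose n := by
  have h := Nat.add_choose_eq k (2*n - k) n
  rw [Nat.add_sub_cancel' hk] at h
  rw [h, Finset.Nat.sum_antidiagonal_eq_sum_range_succ_mk]

lemma pochh_nat (a j : ℕ) :
    (ascPochhammer ℚ j).eval ((a : ℚ) + 1) = ((a + j).choose j : ℚ) * (j.factorial : ℚ) := by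
  have : ((a : ℚ) + 1) = ((a + 1 : ℕ) : ℚ) := by push_cast; ring
  rw [this, ← ascPochhammer_eval_cast, ascPochhammer_nat_eq_ascFactorial,
    Nat.ascFactorial_eq_factorial_mul_choose]
  push_cast
  ring

/-- The diagonal of the four-variable algebraic function
`((1-x-y)^{2/3}/(1-x-y-z)) · (1-w)^{-5/9}` equals
`₄F₃([1/9, 4/9, 5/9, 7/9], [1/3, 1, 1], 27x)`, stated coefficient-wise. -/
theorem diagonal_four_variable_4F3 (n : ℕ) :
    (∑ j ∈ range (n + 1), ∑ k ∈ range (2 * n + 1),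
        ((ascPochhammer ℚ k).eval (-(2 / 3)) / (Nat.factorial k : ℚ)) *
          (Nat.choose k j : ℚ) * (Nat.choose (3 * n - k) (2 * n - k) : ℚ) *
          (Nat.choose (2 * n - k) (n - j) : ℚ)) *
      ((ascPochhammer ℚ n).eval (5 / 9) / (Nat.factorial n : ℚ)) =
    27 ^ n * (ascPochhammer ℚ n).eval (1 / 9) * (ascPochhammer ℚ n).eval (4 / 9) *
        (ascPochhammer ℚ n).eval (5 / 9) * (ascPochhammer ℚ n).eval (7 / 9) /
      ((ascPochhammer ℚ n).eval (1 / 3) * (Nat.factorial n : ℚ) ^ 3) := by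
  have hfac : ∀ m : ℕ, (m.factorial : ℚ) ≠ 0 := fun m => by
    exact_mod_cast m.factorial_ne_zero
  -- Step 1: swap sums, apply Vandermonde
  have step1 : (∑ j ∈ range (n + 1), ∑ k ∈ range (2 * n + 1),
        ((ascPochhammer ℚ k).eval (-(2 / 3)) / (Nat.factorial k : ℚ)) *
          (Nat.choose k j : ℚ) * (Nat.choose (3 * n - k) (2 * n - k) : ℚ) *
          (Nat.choose (2 * n - k) (n - j) : ℚ))
      = ((2*n).choose n : ℚ) * ∑ k ∈ range (2 * n + 1),
          (ascPochhammer ℚ k).eval (-(2 / 3)) / (Nat.factorial k : ℚ) *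
            (Nat.choose (3 * n - k) (2 * n - k) : ℚ) := by
    rw [Finset.sum_comm, Finset.mul_sum]
    refine Finset.sum_congr rfl fun k hk => ?_
    have hk' : k ≤ 2 * n := Nat.lt_succ_iff.mp (Finset.mem_range.mp hk)
    have h : ∑ j ∈ range (n + 1),
        ((ascPochhammer ℚ k).eval (-(2 / 3)) / (Nat.factorial k : ℚ)) *
          (Nat.choose k j : ℚ) * (Nat.choose (3 * n - k) (2 * n - k) : ℚ) *
          (Nat.choose (2 * n - k) (n - j) : ℚ)
        = ((ascPochhammer ℚ k).eval (-(2 / 3)) / (Nat.factorial k : ℚ)) *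
            (Nat.choose (3 * n - k) (2 * n - k) : ℚ) *
            ((∑ j ∈ range (n + 1), k.choose j * (2*n - k).choose (n - j) : ℕ) : ℚ) := by
      push_cast [Finset.mul_sum]
      exact Finset.sum_congr rfl fun j _ => by ring
    rw [h, vdm n k hk']
    ring
  -- Step 2: the remaining single sum via Chu–Vandermonde for Pochhammer
  have step2 : ∑ k ∈ range (2 * n + 1),
      (ascPochhammer ℚ k).eval (-(2 / 3)) / (Nat.factorial k : ℚ) *
        (Nat.choose (3 * n - k) (2 * n - k) : ℚ)
      = (ascPochhammer ℚ (2*n)).eval (1/3 + (n:ℚ)) / ((2*n).factorial : ℚ) := by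
    have hterm : ∀ k ∈ range (2 * n + 1),
        (ascPochhammer ℚ k).eval (-(2 / 3)) / (Nat.factorial k : ℚ) *
          (Nat.choose (3 * n - k) (2 * n - k) : ℚ)
        = ((2*n).choose k : ℚ) * (ascPochhammer ℚ k).eval (-(2/3)) *
            (ascPochhammer ℚ (2*n - k)).eval ((n:ℚ) + 1) / ((2*n).factorial : ℚ) := by
      intro k hk
      have hk' : k ≤ 2 * n := Nat.lt_succ_iff.mp (Finset.mem_range.mp hk)
      have h1 : (ascPochhammer ℚ (2*n - k)).eval ((n:ℚ) + 1)
          = ((3*n - k).choose (2*n - k) : ℚ) * ((2*n - k).factorial : ℚ) := by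
        rw [pochh_nat n (2*n - k), show n + (2*n - k) = 3*n - k from by omega]
      have h2 : (((2*n).choose k : ℕ) : ℚ) * (k.factorial : ℚ) * ((2*n - k).factorial : ℚ)
          = ((2*n).factorial : ℚ) := by
        exact_mod_cast congrArg (Nat.cast : ℕ → ℚ)
          (Nat.choose_mul_factorial_mul_factorial hk')
      rw [h1]
      set A := (ascPochhammer ℚ k).eval (-(2/3)) with hA
      field_simp
      linear_combination (-(A * ((3*n - k).choose (2*n - k) : ℚ))) * h2
    rw [Finset.sum_congr rfl hterm, ← Finset.sum_div,
      chu (-(2/3)) ((n:ℚ) + 1) (2*n), show (-(2/3) : ℚ) + ((n:ℚ) + 1) = 1/3 + (n:ℚ) from by ring]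
  rw [step1, step2]
  -- Final assembly
  have h13 : (ascPochhammer ℚ n).eval (1/3) ≠ 0 :=
    ne_of_gt (ascPochhammer_pos n (1/3 : ℚ) (by norm_num))
  have hX : (ascPochhammer ℚ n).eval (1/3) * (ascPochhammer ℚ (2*n)).eval (1/3 + (n:ℚ))
      = 27 ^ n * (ascPochhammer ℚ n).eval (1/9) * (ascPochhammer ℚ n).eval (4/9) *
        (ascPochhammer ℚ n).eval (7/9) := by
    rw [prodlem, trip]
  have hCnat := Nat.choose_mul_factorial_mul_factorial (show n ≤ 2*n by omega)
  rw [show 2*n - n = n from by omega] at hCnat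
  have hC : (((2*n).choose n : ℕ) : ℚ) * (n.factorial : ℚ) * (n.factorial : ℚ)
      = ((2*n).factorial : ℚ) := by exact_mod_cast congrArg (Nat.cast : ℕ → ℚ) hCnat
  set X := (ascPochhammer ℚ (2*n)).eval (1/3 + (n:ℚ)) with hXdef
  rw [← hC]
  have hCne : (((2*n).choose n : ℕ) : ℚ) ≠ 0 := by
    exact_mod_cast (Nat.choose_pos (by omega : n ≤ 2*n)).ne'
  field_simp
  linear_combination ((ascPochhammer ℚ n).eval (5/9)) * hX
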